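/- Let a, b, c, d, e, m be integers and let k be a nonnegative integer such that F(d−c)·F(e−b) − F(e−c)·F(d−b) ≠ 0 and F(d−a)·F(e−c) − F(e−a)·F(d−c) ≠ 0 (as rational numbers). Then ∑_{r=0}^{k} C(k,r) · ((F(d−c)·F(e−b) − F(e−c)·F(d−b)) / (F(d−a)·F(e−c) − F(e−a)·F(d−c)))^r · F(m − (b−c)·k + (b−a)·r) = ((F(d−a)·F(e−b) − F(e−a)·F(d−b)) / (F(d−a)·F(e−c) − F(e−a)·F(d−c)))^k · F(m), where C(k,r) denotes the binomial coefficient and the identity is an equality of rational numbers. -/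

import Mathlib

open Finset

private lemma neg_one_zpow_congr {x y : ℤ} (h : 2 ∣ (x - y)) :
    ((-1:ℚ))^x = (-1:ℚ)^y := by
  obtain ⟨t, ht⟩ := h
  rw [show x = y + 2*t by omega, zpow_add₀ (by norm_num : (-1:ℚ) ≠ 0), zpow_mul]
  norm_num

private lemma fib_unique (G H : ℤ → ℚ) (hG : ∀ n, G (n+2) = G (n+1) + G n)
    (hH : ∀ n, H (n+2) = H (n+1) + H n) (h0 : G 0 = H 0) (h1 : G 1 = H 1) :
    ∀ n, G n = H n := by
  have key : ∀ n : ℤ, G n = H n ∧ G (n+1) = H (n+1) := by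
    intro n
    induction n using Int.induction_on with
    | zero => exact ⟨h0, h1⟩
    | succ i ih =>
        refine ⟨ih.2, ?_⟩
        have e1 := hG (i:ℤ); have e2 := hH (i:ℤ)
        rw [show ((i:ℤ)+1+1) = (i:ℤ)+2 by ring]
        rw [e1, e2, ih.1, ih.2]
    | pred i ih =>
        constructor
        · have e1 := hG (-(i:ℤ)-1); have e2 := hH (-(i:ℤ)-1)
          rw [show (-(i:ℤ)-1+2) = -(i:ℤ)+1 by ring, show (-(i:ℤ)-1+1) = -(i:ℤ) by ring]
            at e1 e2
          have := ih.1; have := ih.2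
          linarith
        · rw [show (-(i:ℤ)-1+1) = -(i:ℤ) by ring]; exact ih.1
  exact fun n => (key n).1
section
variable (g : ℤ → ℚ) (hrec : ∀ n : ℤ, g n = g (n-1) + g (n-2))
  (hg0 : g 0 = 0) (hg1 : g 1 = 1)

include hrec in
private lemma grec' : ∀ n : ℤ, g (n+2) = g (n+1) + g n := by
  intro n
  have h := hrec (n+2)
  rw [show n+2-1 = n+1 by ring, show n+2-2 = n by ring] at h
  exact h

include hrec hg0 hg1 in
private lemma gcassini : ∀ n : ℤ, g (n-1) * g (n+1) - g n * g n = (-1:ℚ)^n := by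
  have hm1 : g (-1) = 1 := by have h := hrec 1; simp [hg0, hg1] at h; linarith [h]
  intro n
  induction n using Int.induction_on with
  | zero => norm_num [hg0, hg1, hm1]
  | succ i ih =>
      have h1 : g ((i:ℤ)+1) = g i + g ((i:ℤ)-1) := by
        have := grec' g hrec ((i:ℤ)-1)
        rw [show (i:ℤ)-1+2 = (i:ℤ)+1 by ring, show (i:ℤ)-1+1 = (i:ℤ) by ring] at this
        exact this
      have h2 := grec' g hrec (i:ℤ)
      rw [show ((i:ℤ)+1-1) = (i:ℤ) by ring, show ((i:ℤ)+1+1) = (i:ℤ)+2 by ring,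
        zpow_add₀ (by norm_num : (-1:ℚ) ≠ 0)]
      rw [h1] at ih
      rw [h2, h1]
      ring_nf
      ring_nf at ih
      linarith [ih]
  | pred i ih =>
      have h1 : g (-(i:ℤ)-2) = g (-(i:ℤ)) - g (-(i:ℤ)-1) := by
        have := hrec (-(i:ℤ))
        rw [show -(i:ℤ)-1 = -(i:ℤ)-1 by ring] at this
        linarith [this]
      have h2 : g (-(i:ℤ)-1) = g (-(i:ℤ)+1) - g (-(i:ℤ)) := by
        have := hrec (-(i:ℤ)+1)
        rw [show -(i:ℤ)+1-1 = -(i:ℤ) by ring, show -(i:ℤ)+1-2 = -(i:ℤ)-1 by ring] at this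
        linarith [this]
      rw [show (-(i:ℤ)-1-1) = -(i:ℤ)-2 by ring, show (-(i:ℤ)-1+1) = -(i:ℤ) by ring,
        show (-(i:ℤ)-1) = -(i:ℤ) + (-1) by ring, zpow_add₀ (by norm_num : (-1:ℚ) ≠ 0)]
      rw [show (-(i:ℤ)-1) = -(i:ℤ) + (-1) by ring] at h1 h2 ih
      rw [h1, h2]
      rw [h2] at ih
      ring_nf
      ring_nf at ih
      nlinarith [ih]

include hrec hg0 hg1 in
private lemma gadd : ∀ x y : ℤ, g (x+y) = g x * g (y+1) + g (x-1) * g y := by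
  intro x
  have hg2 : g 2 = 1 := by
    have := grec' g hrec 0; simp [hg0, hg1] at this; simpa using this
  refine fib_unique (fun y => g (x+y)) (fun y => g x * g (y+1) + g (x-1) * g y) ?_ ?_ ?_ ?_
  · intro n
    have := grec' g hrec (x+n)
    rw [show x+n+2 = x+(n+2) by ring, show x+n+1 = x+(n+1) by ring] at this
    exact this
  · intro n
    have h1 := grec' g hrec (n+1)
    have h2 := grec' g hrec n
    rw [show n+2+1 = n+1+2 by ring, h1, h2]
    ring
  · simp [hg0, hg1]
  · have := hrec (x+1)
    rw [show x+1-1 = x by ring, show x+1-2 = x-1 by ring] at this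
    rw [show (1:ℤ)+1 = 2 by ring, hg2, hg1]
    linarith [this]

include hrec hg0 hg1 in
private lemma gneg : ∀ n : ℤ, g (-n) = (-1:ℚ)^(n+1) * g n := by
  have hm1 : g (-1) = 1 := by have h := hrec 1; simp [hg0, hg1] at h; linarith [h]
  have key : ∀ n : ℤ, (-1:ℚ)^n * g (-n) = - g n := by
    refine fib_unique (fun n => (-1:ℚ)^n * g (-n)) (fun n => - g n) ?_ ?_ ?_ ?_
    · intro n
      have h := hrec (-n)
      rw [show -n-1 = -(n+1) by ring, show -n-2 = -(n+2) by ring] at h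
      have e1 : (-1:ℚ)^(n+2) = (-1:ℚ)^n := by
        rw [zpow_add₀ (by norm_num : (-1:ℚ) ≠ 0)]; norm_num
      have e2 : (-1:ℚ)^(n+1) = -(-1:ℚ)^n := by
        rw [zpow_add₀ (by norm_num : (-1:ℚ) ≠ 0)]; norm_num
      rw [e1, e2]
      linear_combination (-(-1:ℚ)^n) * h
    · intro n
      have := grec' g hrec n
      linarith [this]
    · simp [hg0]
    · simp [hm1, hg1]
  intro n
  have h := key n
  have sq : (-1:ℚ)^n * (-1:ℚ)^n = 1 := by
    rw [← zpow_add₀ (by norm_num : (-1:ℚ) ≠ 0)]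
    rw [neg_one_zpow_congr (x := n+n) (y := 0) ⟨n, by ring⟩]
    norm_num
  have e2 : (-1:ℚ)^(n+1) = -(-1:ℚ)^n := by
    rw [zpow_add₀ (by norm_num : (-1:ℚ) ≠ 0)]; norm_num
  rw [e2]
  calc g (-n) = ((-1:ℚ)^n * (-1:ℚ)^n) * g (-n) := by rw [sq]; ring
  _ = (-1:ℚ)^n * ((-1:ℚ)^n * g (-n)) := by ring
  _ = -(-1:ℚ)^n * g n := by rw [h]; ring

include hrec hg0 hg1 in
private lemma gvajda : ∀ n i j : ℤ,
    g (n+i) * g (n+j) - g n * g (n+i+j) = (-1:ℚ)^n * g i * g j := by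
  intro n i j
  have a1 := gadd g hrec hg0 hg1 n i
  have a2 := gadd g hrec hg0 hg1 n j
  have a3 := gadd g hrec hg0 hg1 n (i+j)
  have a4 := gadd g hrec hg0 hg1 (i+1) j
  have a5 := gadd g hrec hg0 hg1 i j
  have cas := gcassini g hrec hg0 hg1 n
  have hi : g (i+1) = g i + g (i-1) := by
    have := hrec (i+1)
    rw [show i+1-1 = i by ring, show i+1-2 = i-1 by ring] at this
    linarith [this]
  have hn1 : g (n+1) = g n + g (n-1) := by
    have := hrec (n+1)
    rw [show n+1-1 = n by ring, show n+1-2 = n-1 by ring] at this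
    linarith [this]
  rw [show n+(i+j) = n+i+j by ring] at a3
  rw [show i+1+j = i+j+1 by ring, show i+1-1 = i by ring] at a4
  rw [hn1] at cas
  rw [a1, a2, a3, a4, a5]
  linear_combination (g i * g j) * cas + (g n * g (n-1) * g j) * hi

include hrec hg0 hg1 in
private lemma gB : ∀ p q m : ℤ,
    g (p+q) * g (m-q) - g p * g m = (-1:ℚ)^p * g q * g (m-p-q) := by
  intro p q m
  have := gvajda g hrec hg0 hg1 p q (m-p-q)
  rw [show p+(m-p-q) = m-q by ring, show p+q+(m-p-q) = m by ring] at this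
  linear_combination this


include hrec hg0 hg1 in
private lemma gsum (p q : ℤ) (hpq : g (p+q) ≠ 0) :
    ∀ (k : ℕ) (m : ℤ),
      ∑ r ∈ range (k+1), (k.choose r : ℚ) *
        ((-1:ℚ)^(p+1) * g q / g (p+q))^r * g (m - q*(k:ℤ) - p*(r:ℤ))
      = (g p / g (p+q))^k * g m := by
  intro k
  induction k with
  | zero =>
      intro m
      rw [Finset.sum_range_one]
      norm_num
  | succ k ih =>
      intro m
      have key : g (m-q) + ((-1:ℚ)^(p+1) * g q / g (p+q)) * g (m-q-p)
          = (g p / g (p+q)) * g m := by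
        have B := gB g hrec hg0 hg1 p q m
        have e : (-1:ℚ)^(p+1) = -(-1:ℚ)^p := by
          rw [zpow_add₀ (by norm_num : (-1:ℚ) ≠ 0)]; norm_num
        rw [show m-q-p = m-p-q by ring, e]
        field_simp
        linear_combination B
      have hs := Finset.sum_choose_succ_mul
        (fun i _ : ℕ => ((-1:ℚ)^(p+1) * g q / g (p+q))^i * g (m - q*((k:ℤ)+1) - p*(i:ℤ))) k
      calc ∑ r ∈ range (k+1+1), ((k+1).choose r : ℚ) *
            ((-1:ℚ)^(p+1) * g q / g (p+q))^r * g (m - q*((k+1:ℕ):ℤ) - p*(r:ℤ))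
          = ∑ r ∈ range (k+2), ((k+1).choose r : ℚ) *
            (((-1:ℚ)^(p+1) * g q / g (p+q))^r * g (m - q*((k:ℤ)+1) - p*(r:ℤ))) := by
            refine Finset.sum_congr rfl fun r _ => ?_
            push_cast
            ring
        _ = (∑ r ∈ range (k+1), (k.choose r : ℚ) *
              (((-1:ℚ)^(p+1) * g q / g (p+q))^r * g (m - q*((k:ℤ)+1) - p*(r:ℤ))))
            + ∑ r ∈ range (k+1), (k.choose r : ℚ) *
              (((-1:ℚ)^(p+1) * g q / g (p+q))^(r+1) * g (m - q*((k:ℤ)+1) - p*((r:ℤ)+1))) := hs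
        _ = (g p / g (p+q))^k * g (m-q)
            + ((-1:ℚ)^(p+1) * g q / g (p+q)) * ((g p / g (p+q))^k * g (m-q-p)) := by
            congr 1
            · rw [← ih (m-q)]
              refine Finset.sum_congr rfl fun r _ => ?_
              rw [show m - q*((k:ℤ)+1) - p*(r:ℤ) = (m-q) - q*(k:ℤ) - p*(r:ℤ) by ring]
              ring
            · rw [← ih (m-q-p), Finset.mul_sum]
              refine Finset.sum_congr rfl fun r _ => ?_
              rw [show m - q*((k:ℤ)+1) - p*((r:ℤ)+1) = (m-q-p) - q*(k:ℤ) - p*(r:ℤ) by ring]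
              ring
        _ = (g p / g (p+q))^(k+1) * g m := by
            rw [pow_succ]
            linear_combination ((g p / g (p+q))^k) * key

end

/-- Weighted binomial sum identity for the Fibonacci numbers extended to all
integers, as an identity of rational numbers. -/
theorem stmt_19 (F : ℤ → ℤ)
    (hF0 : F 0 = 0) (hF1 : F 1 = 1)
    (hF : ∀ n : ℤ, F n = F (n - 1) + F (n - 2))
    (a b c d e m : ℤ) (k : ℕ)
    (h1 : (F (d - c) : ℚ) * F (e - b) - F (e - c) * F (d - b) ≠ 0)
    (h2 : (F (d - a) : ℚ) * F (e - c) - F (e - a) * F (d - c) ≠ 0) :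
    ∑ r ∈ Finset.range (k + 1),
      (k.choose r : ℚ) *
        (((F (d - c) : ℚ) * F (e - b) - F (e - c) * F (d - b)) /
            ((F (d - a) : ℚ) * F (e - c) - F (e - a) * F (d - c))) ^ r *
        F (m - (b - c) * (k : ℤ) + (b - a) * (r : ℤ))
      = (((F (d - a) : ℚ) * F (e - b) - F (e - a) * F (d - b)) /
            ((F (d - a) : ℚ) * F (e - c) - F (e - a) * F (d - c))) ^ k
          * F m := by
  have hrec : ∀ n : ℤ, ((F n : ℚ)) = (F (n-1) : ℚ) + (F (n-2) : ℚ) := by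
    intro n; exact_mod_cast congrArg (fun z : ℤ => (z : ℚ)) (hF n)
  have hg0 : ((F 0 : ℚ)) = 0 := by exact_mod_cast congrArg (fun z : ℤ => (z : ℚ)) hF0
  have hg1 : ((F 1 : ℚ)) = 1 := by exact_mod_cast congrArg (fun z : ℤ => (z : ℚ)) hF1
  set g : ℤ → ℚ := fun n => (F n : ℚ) with hgdef
  have hX : (F (d-c) : ℚ) * F (e-b) - (F (e-c) : ℚ) * F (d-b)
      = (-1:ℚ)^(d-b) * F (b-c) * F (e-d) := by
    have h := gvajda g hrec hg0 hg1 (d-b) (b-c) (e-d)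
    rw [show d-b+(b-c)+(e-d) = e-c by ring, show d-b+(b-c) = d-c by ring,
        show d-b+(e-d) = e-b by ring] at h
    linear_combination h
  have hY : (F (d-a) : ℚ) * F (e-c) - (F (e-a) : ℚ) * F (d-c)
      = (-1:ℚ)^(d-c) * F (c-a) * F (e-d) := by
    have h := gvajda g hrec hg0 hg1 (d-c) (c-a) (e-d)
    rw [show d-c+(c-a)+(e-d) = e-a by ring, show d-c+(c-a) = d-a by ring,
        show d-c+(e-d) = e-c by ring] at h
    linear_combination h
  have hZ : (F (d-a) : ℚ) * F (e-b) - (F (e-a) : ℚ) * F (d-b)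
      = (-1:ℚ)^(d-b) * F (b-a) * F (e-d) := by
    have h := gvajda g hrec hg0 hg1 (d-b) (b-a) (e-d)
    rw [show d-b+(b-a)+(e-d) = e-a by ring, show d-b+(b-a) = d-a by ring,
        show d-b+(e-d) = e-b by ring] at h
    linear_combination h
  rw [hY] at h2
  have hca : (F (c-a) : ℚ) ≠ 0 := by
    intro h; exact h2 (by rw [h]; ring)
  have hed : (F (e-d) : ℚ) ≠ 0 := by
    intro h; exact h2 (by rw [h]; ring)
  have hbc : (F (b-c) : ℚ) ≠ 0 := by
    intro h; rw [hX] at h1; exact h1 (by rw [h]; ring)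
  have hneg_ac : (F (a-c) : ℚ) = (-1:ℚ)^((c-a)+1) * F (c-a) := by
    have h := gneg g hrec hg0 hg1 (c-a)
    rw [show -(c-a) = a-c by ring] at h
    exact h
  have hneg_ab : (F (a-b) : ℚ) = (-1:ℚ)^((b-a)+1) * F (b-a) := by
    have h := gneg g hrec hg0 hg1 (b-a)
    rw [show -(b-a) = a-b by ring] at h
    exact h
  have hac : (F (a-c) : ℚ) ≠ 0 := by
    rw [hneg_ac]
    exact mul_ne_zero (zpow_ne_zero _ (by norm_num)) hca
  have hpq : ((F ((a-b)+(b-c)) : ℚ)) ≠ 0 := by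
    rw [show (a-b)+(b-c) = a-c by ring]; exact hac
  have S := gsum g hrec hg0 hg1 (a-b) (b-c) hpq k m
  rw [show (a-b)+(b-c) = a-c by ring] at S
  have hne2 : (-1:ℚ)^(d-c) * (F (c-a) : ℚ) * F (e-d) ≠ 0 :=
    mul_ne_zero (mul_ne_zero (zpow_ne_zero _ (by norm_num)) hca) hed
  have hratio1 :
      ((F (d-c) : ℚ) * F (e-b) - (F (e-c) : ℚ) * F (d-b)) /
        ((F (d-a) : ℚ) * F (e-c) - (F (e-a) : ℚ) * F (d-c))
      = (-1:ℚ)^((a-b)+1) * F (b-c) / F (a-c) := by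
    rw [hX, hY, hneg_ac]
    have hsg : (-1:ℚ)^(d-b) * (-1:ℚ)^((c-a)+1) = (-1:ℚ)^((a-b)+1) * (-1:ℚ)^(d-c) := by
      rw [← zpow_add₀ (by norm_num : (-1:ℚ) ≠ 0), ← zpow_add₀ (by norm_num : (-1:ℚ) ≠ 0)]
      exact neg_one_zpow_congr ⟨c-a, by ring⟩
    field_simp
    linear_combination hsg
  have hratio2 :
      ((F (d-a) : ℚ) * F (e-b) - (F (e-a) : ℚ) * F (d-b)) /
        ((F (d-a) : ℚ) * F (e-c) - (F (e-a) : ℚ) * F (d-c))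
      = (F (a-b) : ℚ) / F (a-c) := by
    rw [hZ, hY, hneg_ac, hneg_ab]
    have hsg : (-1:ℚ)^(d-b) * (-1:ℚ)^((c-a)+1) = (-1:ℚ)^((b-a)+1) * (-1:ℚ)^(d-c) := by
      rw [← zpow_add₀ (by norm_num : (-1:ℚ) ≠ 0), ← zpow_add₀ (by norm_num : (-1:ℚ) ≠ 0)]
      exact neg_one_zpow_congr ⟨c-b, by ring⟩
    field_simp
    linear_combination (F (b-a) : ℚ) * hsg
  rw [hratio2]
  calc ∑ r ∈ Finset.range (k + 1),
      (k.choose r : ℚ) *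
        (((F (d - c) : ℚ) * F (e - b) - (F (e - c) : ℚ) * F (d - b)) /
            ((F (d - a) : ℚ) * F (e - c) - (F (e - a) : ℚ) * F (d - c))) ^ r *
        F (m - (b - c) * (k : ℤ) + (b - a) * (r : ℤ))
      = ∑ r ∈ Finset.range (k + 1),
        (k.choose r : ℚ) * ((-1:ℚ)^((a-b)+1) * F (b-c) / F (a-c)) ^ r *
          F (m - (b-c) * (k:ℤ) - (a-b) * (r:ℤ)) := by
        refine Finset.sum_congr rfl fun r _ => ?_
        rw [hratio1, show m - (b-c)*(k:ℤ) + (b-a)*(r:ℤ) = m - (b-c)*(k:ℤ) - (a-b)*(r:ℤ) by ring]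
    _ = ((F (a-b) : ℚ) / F (a-c)) ^ k * F m := S
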